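/- Under axioms A1–A7 for a simple system Γ (an open convex subset of ℝ^{n+1}), every forward sector A_X = {Y ∈ Γ : X ≺ Y} is a closed subset of Γ (relative to Γ). -/

import Mathlib

open Set

lemma seg_aux {E : Type*} [NormedAddCommGroup E] [NormedSpace ℝ E] [FiniteDimensional ℝ E]
    {S : Set E} (hconv : Convex ℝ S) {p Y : E} (hp : p ∈ S) (hY : Y ∈ closure S) :
    ∃ Z, ∀ s : ℝ, 0 < s → s < 1 → Y + s • (Z - Y) ∈ S := by
  set V : Submodule ℝ E := Submodule.span ℝ ((fun x => x - p) '' S) with hV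
  have memV : ∀ x ∈ S, x - p ∈ V := fun x hx => Submodule.subset_span ⟨x, hx, rfl⟩
  set T : Set V := {v : V | (v : E) + p ∈ S} with hT
  have h0T : (0 : V) ∈ T := by simp [hT, hp]
  have hTconv : Convex ℝ T := by
    intro v₁ h₁ v₂ h₂ a b ha hb hab
    have key : ((a • v₁ + b • v₂ : V) : E) + p = a • ((v₁ : E) + p) + b • ((v₂ : E) + p) := by
      push_cast
      match_scalars <;> linarith
    show ((a • v₁ + b • v₂ : V) : E) + p ∈ S
    rw [key]
    exact hconv h₁ h₂ ha hb hab
  have hspanT : Submodule.span ℝ T = ⊤ := by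
    have main : ∀ (x : E) (hx : x ∈ V), (⟨x, hx⟩ : V) ∈ Submodule.span ℝ T := by
      intro x hx
      induction hx using Submodule.span_induction with
      | mem x hxg =>
        obtain ⟨y, hy, rfl⟩ := hxg
        exact Submodule.subset_span (by simpa [hT] using hy)
      | zero => exact Submodule.zero_mem _
      | add x y hx hy ihx ihy =>
        have : (⟨x + y, _⟩ : V) = ⟨x, hx⟩ + ⟨y, hy⟩ := rfl
        rw [this]; exact Submodule.add_mem _ ihx ihy
      | smul a x hx ihx =>
        have : (⟨a • x, _⟩ : V) = a • ⟨x, hx⟩ := rfl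
        rw [this]; exact Submodule.smul_mem _ _ ihx
    rw [Submodule.eq_top_iff']
    intro v
    simpa using main v v.2
  have hvspanT : vectorSpan ℝ T = ⊤ := by
    rw [Submodule.eq_top_iff']
    intro v
    have hle : Submodule.span ℝ T ≤ vectorSpan ℝ T := by
      rw [vectorSpan_def]
      apply Submodule.span_le.2
      intro u hu
      exact Submodule.subset_span ⟨u, hu, 0, h0T, by simp⟩
    exact hle (hspanT ▸ Submodule.mem_top)
  have hspan : affineSpan ℝ T = ⊤ :=
    (AffineSubspace.affineSpan_eq_top_iff_vectorSpan_eq_top_of_nonempty ℝ V V ⟨0, h0T⟩).2 hvspanT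
  have hint : (interior T).Nonempty :=
    hTconv.interior_nonempty_iff_affineSpan_eq_top.2 hspan
  have hVclosed : IsClosed (V : Set E) := Submodule.closed_of_finiteDimensional V
  have hy₀V : Y - p ∈ V := by
    have h1 : Y - p ∈ closure ((fun x => x - p) '' S) := by
      have := image_closure_subset_closure_image (f := fun x => x - p)
        (s := S) (by continuity)
      exact this ⟨Y, hY, rfl⟩
    have h2 : closure ((fun x => x - p) '' S) ⊆ closure (V : Set E) :=
      closure_mono (fun x hx => Submodule.subset_span hx)
    have h3 := h2 h1
    rwa [hVclosed.closure_eq] at h3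
  set y₀ : V := ⟨Y - p, hy₀V⟩ with hy₀
  have hy₀cl : y₀ ∈ closure T := by
    rw [Metric.mem_closure_iff]
    intro ε hε
    obtain ⟨b, hb, hdb⟩ := Metric.mem_closure_iff.1 hY ε hε
    refine ⟨⟨b - p, memV b hb⟩, by simpa [hT] using hb, ?_⟩
    rw [Subtype.dist_eq]
    show dist (Y - p) (b - p) < ε
    rw [dist_sub_right]; exact hdb
  obtain ⟨z, hz⟩ := hint
  refine ⟨(z : E) + p, ?_⟩
  intro s hs hs1
  have hmem : s • z + (1 - s) • y₀ ∈ T :=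
    interior_subset (hTconv.combo_interior_closure_mem_interior hz hy₀cl hs
      (by linarith) (by ring))
  have : ((s • z + (1 - s) • y₀ : V) : E) + p = Y + s • (((z : E) + p) - Y) := by
    push_cast [hy₀]
    module
  have hmem' : ((s • z + (1 - s) • y₀ : V) : E) + p ∈ S := hmem
  rw [this] at hmem'
  exact hmem'

/-- Step 1 in the proof of Theorem 3 of Lieb–Yngvason: under A1–A7, every forward
sector A_X = {Y ∈ Γ : X ≺ Y} of a simple system is relatively closed in Γ. -/
theorem forward_sector_closed {N : ℕ}
    {St : Type*} (prec : St → St → Prop)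
    (comp : St → St → St) (scale : ℝ → St → St)
    (ι : EuclideanSpace ℝ (Fin N) → St)
    (Γ : Set (EuclideanSpace ℝ (Fin N)))
    (hΓopen : IsOpen Γ) (hΓconv : Convex ℝ Γ)
    (comp_comm : ∀ X Y, comp X Y = comp Y X)
    (comp_assoc : ∀ X Y Z, comp (comp X Y) Z = comp X (comp Y Z))
    (scale_one : ∀ X, scale 1 X = X)
    (scale_scale : ∀ (a b : ℝ) (X : St), 0 < a → 0 < b →
      scale a (scale b X) = scale (a * b) X)
    (scale_comp : ∀ (a : ℝ) (X Y : St), 0 < a →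
      scale a (comp X Y) = comp (scale a X) (scale a Y))
    -- scaling of states of the simple system is scalar multiplication in ℝ^N
    (hscale : ∀ (t : ℝ) (X : EuclideanSpace ℝ (Fin N)), 0 < t →
      scale t (ι X) = ι (t • X))
    (A1 : ∀ X, prec X X)
    (A2 : ∀ X Y Z, prec X Y → prec Y Z → prec X Z)
    (A3 : ∀ X Xp Y Yp, prec X Xp → prec Y Yp → prec (comp X Y) (comp Xp Yp))
    (A4 : ∀ (l : ℝ) (X Y : St), 0 < l → prec X Y → prec (scale l X) (scale l Y))
    (A5 : ∀ (l : ℝ) (X : St), 0 < l → l < 1 →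
      prec X (comp (scale (1 - l) X) (scale l X)) ∧
      prec (comp (scale (1 - l) X) (scale l X)) X)
    (A6 : ∀ (X Y Z₀ Z₁ : St) (ε : ℕ → ℝ), (∀ n, 0 < ε n) →
      Filter.Tendsto ε Filter.atTop (nhds 0) →
      (∀ n, prec (comp X (scale (ε n) Z₀)) (comp Y (scale (ε n) Z₁))) →
      prec X Y)
    (A7 : ∀ (t : ℝ) (X Y : EuclideanSpace ℝ (Fin N)), X ∈ Γ → Y ∈ Γ →
      0 < t → t < 1 →
      prec (comp (scale t (ι X)) (scale (1 - t) (ι Y))) (ι (t • X + (1 - t) • Y))) :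
    ∀ X ∈ Γ, ∀ Y ∈ Γ, Y ∈ closure {Z | Z ∈ Γ ∧ prec (ι X) (ι Z)} →
      prec (ι X) (ι Y) := by
  intro X hX Y hY hYcl
  set S : Set (EuclideanSpace ℝ (Fin N)) := {Z | Z ∈ Γ ∧ prec (ι X) (ι Z)} with hSdef
  -- merging lemma: composition of scaled states precedes the "sum" state
  have hmerge : ∀ (a b : ℝ) (U V : EuclideanSpace ℝ (Fin N)), 0 < a → 0 < b → U ∈ Γ → V ∈ Γ →
      prec (comp (ι (a • U)) (ι (b • V))) (ι (a • U + b • V)) := by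
    intro a b U V ha hb hU hV
    have hs : (0:ℝ) < a + b := by linarith
    have ht : 0 < a / (a+b) := div_pos ha hs
    have ht1 : a / (a+b) < 1 := (div_lt_one hs).2 (by linarith)
    have h1mt : (0:ℝ) < 1 - a/(a+b) := by linarith
    have h4 := A4 (a+b) _ _ hs (A7 (a/(a+b)) U V hU hV ht ht1)
    rw [scale_comp _ _ _ hs, scale_scale _ _ _ hs ht, scale_scale _ _ _ hs h1mt,
        hscale _ _ (mul_pos hs ht), hscale _ _ (mul_pos hs h1mt), hscale _ _ hs] at h4
    have hne : a + b ≠ 0 := ne_of_gt hs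
    have e1 : (a+b) * (a/(a+b)) = a := by field_simp
    have e2 : (a+b) * (1 - a/(a+b)) = b := by rw [mul_sub, mul_one, e1]; ring
    have e3 : (a+b) • ((a/(a+b)) • U + (1 - a/(a+b)) • V) = a • U + b • V := by
      rw [smul_add, smul_smul, smul_smul, e1, e2]
    rw [e3, e1, e2] at h4
    exact h4
  -- splitting lemma
  have hsplit : ∀ (a b : ℝ) (P : EuclideanSpace ℝ (Fin N)), 0 < a → 0 < b →
      prec (ι ((a+b) • P)) (comp (ι (a • P)) (ι (b • P))) := by
    intro a b P ha hb
    have hs : (0:ℝ) < a + b := by linarith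
    have hl : 0 < b/(a+b) := div_pos hb hs
    have hl1 : b/(a+b) < 1 := (div_lt_one hs).2 (by linarith)
    have h1ml : (0:ℝ) < 1 - b/(a+b) := by linarith
    have h5 := (A5 (b/(a+b)) (ι ((a+b) • P)) hl hl1).1
    have hne : a + b ≠ 0 := ne_of_gt hs
    have e2 : (b/(a+b)) * (a+b) = b := by field_simp
    have e1 : (1 - b/(a+b)) * (a+b) = a := by rw [sub_mul, one_mul, e2]; ring
    rw [hscale _ _ h1ml, hscale _ _ hl, smul_smul, smul_smul, e1, e2] at h5
    exact h5
  -- scaled monotonicity for states of the simple system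
  have hA4' : ∀ (a : ℝ) (P Q : EuclideanSpace ℝ (Fin N)), 0 < a → prec (ι P) (ι Q) →
      prec (ι (a • P)) (ι (a • Q)) := by
    intro a P Q ha h
    have := A4 a _ _ ha h
    rwa [hscale _ _ ha, hscale _ _ ha] at this
  -- the forward sector S is convex
  have hSconv : Convex ℝ S := by
    intro Z₁ h₁ Z₂ h₂ a b ha hb hab
    rcases ha.eq_or_lt with h|ha'
    · have hb1 : b = 1 := by linarith
      simpa [← h, hb1] using h₂
    rcases hb.eq_or_lt with h|hb'
    · have ha1 : a = 1 := by linarith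
      simpa [← h, ha1] using h₁
    refine ⟨hΓconv h₁.1 h₂.1 ha hb hab, ?_⟩
    have hXsplit : prec (ι X) (comp (ι (a • X)) (ι (b • X))) := by
      have := hsplit a b X ha' hb'
      rwa [hab, one_smul] at this
    have h3 := A3 _ _ _ _ (hA4' a _ _ ha' h₁.2) (hA4' b _ _ hb' h₂.2)
    exact A2 _ _ _ (A2 _ _ _ hXsplit h3) (hmerge a b Z₁ Z₂ ha' hb' h₁.1 h₂.1)
  -- pick the segment direction from seg_aux
  obtain ⟨Z, hseg⟩ := seg_aux hSconv (p := X) ⟨hX, A1 _⟩ hYcl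
  set v : EuclideanSpace ℝ (Fin N) := Z - Y with hv
  -- choose ρ so that Y - ρ•v ∈ Γ
  obtain ⟨δ, hδ, hball⟩ := Metric.isOpen_iff.1 hΓopen Y hY
  obtain ⟨ρ, hρ, hρv⟩ : ∃ ρ : ℝ, 0 < ρ ∧ ρ * ‖v‖ < δ := by
    refine ⟨δ / (2 * (‖v‖ + 1)), by positivity, ?_⟩
    rw [div_mul_eq_mul_div, div_lt_iff₀ (by positivity : (0:ℝ) < 2 * (‖v‖ + 1))]
    nlinarith [norm_nonneg v, hδ]
  set C : EuclideanSpace ℝ (Fin N) := Y - ρ • v with hCdef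
  have hCΓ : C ∈ Γ := by
    apply hball
    rw [Metric.mem_ball, dist_eq_norm]
    have hYC : C - Y = -(ρ • v) := by rw [hCdef]; abel
    rw [hYC, norm_neg, norm_smul, Real.norm_eq_abs, abs_of_pos hρ]
    exact hρv
  obtain ⟨w, hw, hwρ⟩ : ∃ w : ℝ, 0 < w ∧ w * ρ = 2 :=
    ⟨2 / ρ, by positivity, by field_simp⟩
  -- the key family of relations for A6
  have key : ∀ t : ℝ, 0 < t → t < 1 →
      prec (comp (ι X) (scale t (ι (w • C))))
           (comp (ι Y) (scale t (ι (w • C + v)))) := by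
    intro t ht ht1
    have hρt : 0 < ρ + t := by linarith
    obtain ⟨β, hβ, hβ1, hβρt⟩ : ∃ β : ℝ, 0 < β ∧ β < 1 ∧ β * (ρ + t) = t := by
      refine ⟨t / (ρ + t), div_pos ht hρt, (div_lt_one hρt).2 (by linarith), ?_⟩
      field_simp
    have hβtw : β < t * w := by
      nlinarith [mul_pos hw (mul_pos ht ht), mul_pos ht ht]
    have hM : Y + t • v ∈ S := hseg t ht ht1
    set M : EuclideanSpace ℝ (Fin N) := Y + t • v with hMdef
    have hMΓ : M ∈ Γ := hM.1
    have garb : scale t (ι (w • C)) = ι ((t*w) • C) := by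
      rw [hscale _ _ ht, smul_smul]
    have step1 : prec (comp (ι X) (ι ((t*w) • C))) (comp (ι M) (ι ((t*w) • C))) :=
      A3 _ _ _ _ hM.2 (A1 _)
    have split_g : prec (ι ((t*w) • C)) (comp (ι (β • C)) (ι ((t*w - β) • C))) := by
      have := hsplit β (t*w - β) C hβ (by linarith)
      rwa [show β + (t*w - β) = t*w by ring] at this
    have split_m : prec (ι M) (comp (ι ((1-β) • M)) (ι (β • M))) := by
      have := hsplit (1-β) β M (by linarith) hβ
      rwa [show (1-β) + β = 1 by ring, one_smul] at this
    have step2 : prec (comp (ι M) (ι ((t*w) • C)))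
        (comp (comp (ι ((1-β) • M)) (ι (β • M)))
              (comp (ι (β • C)) (ι ((t*w - β) • C)))) :=
      A3 _ _ _ _ split_m split_g
    have shuffle : ∀ A B Cc D : St,
        comp (comp A B) (comp Cc D) = comp (comp A Cc) (comp B D) := by
      intro A B Cc D
      calc comp (comp A B) (comp Cc D) = comp A (comp B (comp Cc D)) := comp_assoc _ _ _
        _ = comp A (comp (comp B Cc) D) := by rw [comp_assoc]
        _ = comp A (comp (comp Cc B) D) := by rw [comp_comm B Cc]
        _ = comp A (comp Cc (comp B D)) := by rw [comp_assoc]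
        _ = comp (comp A Cc) (comp B D) := (comp_assoc _ _ _).symm
    have m1 : prec (comp (ι ((1-β) • M)) (ι (β • C))) (ι ((1-β) • M + β • C)) :=
      hmerge _ _ _ _ (by linarith) hβ hMΓ hCΓ
    have m2 : prec (comp (ι (β • M)) (ι ((t*w - β) • C))) (ι (β • M + (t*w - β) • C)) :=
      hmerge _ _ _ _ hβ (by linarith) hMΓ hCΓ
    have eq1 : (1-β) • M + β • C = Y := by
      rw [hMdef, hCdef]
      match_scalars <;> first | ring1 | linear_combination hβρt | linear_combination -hβρt | linear_combination (2:ℝ) * hβρt | linear_combination (-2:ℝ) * hβρt | linear_combination t * hβρt | linear_combination (-t) * hβρt | linear_combination -hβρt | linear_combination (2:ℝ) * hβρt | linear_combination (-2:ℝ) * hβρt | linear_combination t * hβρt | linear_combination (-t) * hβρt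
    have eq2 : β • M + (t*w - β) • C = t • (w • C + v) := by
      rw [hMdef, hCdef]
      match_scalars <;> first | ring1 | linear_combination hβρt | linear_combination -hβρt | linear_combination (2:ℝ) * hβρt | linear_combination (-2:ℝ) * hβρt | linear_combination t * hβρt | linear_combination (-t) * hβρt
    have step3 : prec (comp (comp (ι ((1-β) • M)) (ι (β • C)))
        (comp (ι (β • M)) (ι ((t*w - β) • C))))
        (comp (ι Y) (ι (t • (w • C + v)))) := by
      have := A3 _ _ _ _ m1 m2
      rwa [eq1, eq2] at this
    have step3' : prec (comp (comp (ι ((1-β) • M)) (ι (β • M)))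
        (comp (ι (β • C)) (ι ((t*w - β) • C))))
        (comp (ι Y) (ι (t • (w • C + v)))) := by
      rw [shuffle]; exact step3
    rw [garb, hscale _ _ ht]
    exact A2 _ _ _ step1 (A2 _ _ _ step2 step3')
  -- apply the stability axiom A6
  have hpos : ∀ n : ℕ, (0:ℝ) < 1 / (n + 2) := by
    intro n; positivity
  have hlt1 : ∀ n : ℕ, (1:ℝ) / (n + 2) < 1 := by
    intro n
    rw [div_lt_one (by positivity)]
    have : (0:ℝ) ≤ (n:ℝ) := Nat.cast_nonneg n
    linarith
  have htend : Filter.Tendsto (fun n : ℕ => 1 / ((n:ℝ) + 2)) Filter.atTop (nhds 0) := by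
    have h1 := tendsto_one_div_add_atTop_nhds_zero_nat (𝕜 := ℝ)
    have h2 : Filter.Tendsto (fun n : ℕ => n + 1) Filter.atTop Filter.atTop :=
      Filter.tendsto_add_atTop_nat 1
    have := h1.comp h2
    convert this using 2 with n
    simp
    push_cast
    ring
  exact A6 (ι X) (ι Y) (ι (w • C)) (ι (w • C + v)) (fun n => 1 / ((n:ℝ) + 2))
    hpos htend (fun n => key _ (hpos n) (hlt1 n))
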